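/- For every trace-zero 3×3 complex matrix X, the trace of (ad X)⁴, where ad X is the endomorphism Y ↦ XY − YX of the space of trace-zero 3×3 complex matrices, equals 9·(tr(X²))². -/

import Mathlib

open LieAlgebra LieAlgebra.SpecialLinear Matrix

noncomputable def slEquiv3 : sl (Fin 3) ℂ ≃ₗ[ℂ] (Fin 8 → ℂ) where
  toFun A := ![A.1 0 0, A.1 1 1, A.1 0 1, A.1 0 2, A.1 1 0, A.1 1 2, A.1 2 0, A.1 2 1]
  map_add' A B := by funext i; fin_cases i <;> rfl
  map_smul' c A := by funext i; fin_cases i <;> rfl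
  invFun v := ⟨!![v 0, v 2, v 3; v 4, v 1, v 5; v 6, v 7, -(v 0 + v 1)],
    show Matrix.trace !![v 0, v 2, v 3; v 4, v 1, v 5; v 6, v 7, -(v 0 + v 1)] = 0 by
      simp [Matrix.trace_fin_three]⟩
  left_inv A := by
    have h2 : Matrix.trace A.1 = 0 := A.2
    rw [Matrix.trace_fin_three] at h2
    have h : A.1 2 2 = -(A.1 0 0 + A.1 1 1) := by linear_combination h2
    apply Subtype.ext
    ext i j
    fin_cases i <;> fin_cases j <;> first | rfl | (simp [h]; try ring)
  right_inv v := by funext i; fin_cases i <;> rfl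


private theorem matSub3 (a1 a2 a3 a4 a5 a6 a7 a8 a9 b1 b2 b3 b4 b5 b6 b7 b8 b9 : ℂ) :
    !![a1,a2,a3;a4,a5,a6;a7,a8,a9] - !![b1,b2,b3;b4,b5,b6;b7,b8,b9]
      = !![a1-b1,a2-b2,a3-b3;a4-b4,a5-b5,a6-b6;a7-b7,a8-b8,a9-b9] := by
  ext i j; fin_cases i <;> fin_cases j <;> rfl

set_option maxHeartbeats 4000000 in
open LieAlgebra LieAlgebra.SpecialLinear in
/-- For every trace-zero 3×3 complex matrix `X`, the trace of `(ad X)⁴` as an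
endomorphism of `sl(3,ℂ)` equals `9·(tr(X²))²`. -/
theorem sl3_adjoint_quartic_trace
    (X : Matrix (Fin 3) (Fin 3) ℂ) (hX : X.trace = 0) :
    LinearMap.trace ℂ (sl (Fin 3) ℂ)
        ((ad ℂ (sl (Fin 3) ℂ) ⟨X, hX⟩) ^ 4) =
      9 * (X ^ 2).trace ^ 2 := by
  have h22 : X 2 2 = -(X 0 0 + X 1 1) := by
    rw [Matrix.trace_fin_three] at hX; linear_combination hX
  classical
  set f := (ad ℂ (sl (Fin 3) ℂ) ⟨X, hX⟩) with hf
  set c : Matrix (Fin 3) (Fin 3) ℂ → Matrix (Fin 3) (Fin 3) ℂ := fun M => X * M - M * X with hc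
  have hcoe : ∀ Y : sl (Fin 3) ℂ, ((f Y) : Matrix (Fin 3) (Fin 3) ℂ) = c Y.1 := fun Y => rfl
  have hpow : ∀ Y : sl (Fin 3) ℂ, (((f^4) Y) : Matrix (Fin 3) (Fin 3) ℂ) = c (c (c (c Y.1))) := by
    intro Y
    have : (f^4) Y = f (f (f (f Y))) := by
      simp [pow_succ, Module.End.mul_apply]
    rw [this, hcoe, hcoe, hcoe, hcoe]
  rw [LinearMap.trace_eq_matrix_trace ℂ (Module.Basis.ofEquivFun slEquiv3), Matrix.trace]
  simp only [Matrix.diag_apply, LinearMap.toMatrix_apply, Module.Basis.ofEquivFun_repr_apply,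
    Module.Basis.coe_ofEquivFun]
  rw [Fin.sum_univ_eight]
  have e0 : ∀ Z : sl (Fin 3) ℂ, slEquiv3 Z 0 = Z.1 0 0 := fun _ => rfl
  have e1 : ∀ Z : sl (Fin 3) ℂ, slEquiv3 Z 1 = Z.1 1 1 := fun _ => rfl
  have e2 : ∀ Z : sl (Fin 3) ℂ, slEquiv3 Z 2 = Z.1 0 1 := fun _ => rfl
  have e3 : ∀ Z : sl (Fin 3) ℂ, slEquiv3 Z 3 = Z.1 0 2 := fun _ => rfl
  have e4 : ∀ Z : sl (Fin 3) ℂ, slEquiv3 Z 4 = Z.1 1 0 := fun _ => rfl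
  have e5 : ∀ Z : sl (Fin 3) ℂ, slEquiv3 Z 5 = Z.1 1 2 := fun _ => rfl
  have e6 : ∀ Z : sl (Fin 3) ℂ, slEquiv3 Z 6 = Z.1 2 0 := fun _ => rfl
  have e7 : ∀ Z : sl (Fin 3) ℂ, slEquiv3 Z 7 = Z.1 2 1 := fun _ => rfl
  have hS : ∀ v : Fin 8 → ℂ, ((slEquiv3.symm v : sl (Fin 3) ℂ) : Matrix (Fin 3) (Fin 3) ℂ)
      = !![v 0, v 2, v 3; v 4, v 1, v 5; v 6, v 7, -(v 0 + v 1)] := fun _ => rfl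
  simp only [e0, e1, e2, e3, e4, e5, e6, e7, hpow, hS]
  simp +decide [Pi.single_apply]
  have hXl : X = !![X 0 0, X 0 1, X 0 2; X 1 0, X 1 1, X 1 2; X 2 0, X 2 1, X 2 2] := by
    ext i j; fin_cases i <;> fin_cases j <;> rfl
  rw [hc, hXl]
  simp only [Matrix.mul_fin_three, matSub3, pow_two, Matrix.trace_fin_three,
    Matrix.cons_val', Matrix.cons_val_zero, Matrix.cons_val_one, Matrix.head_cons,
    Matrix.head_fin_const, Matrix.cons_val_fin_one, Matrix.empty_val',
    Matrix.cons_val_two, Matrix.tail_cons, Matrix.head_val', Matrix.of_apply]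
  simp only [h22]
  ring
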